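/- Let Ω be the open ball in ℝ³ of volume 1 centred at the origin, i.e. of radius (3/(4π))^{1/3}. For s ∈ (0,1), let z_1(s) = (s,0,0), z_2(s) = (−s,0,0) and w = (0,0). Then the Laguerre cells are C_1((z_1(s),z_2(s)),w) = {x ∈ Ω : x·e₁ ≥ 0} and C_2((z_1(s),z_2(s)),w) = {x ∈ Ω : x·e₁ ≤ 0}, each of Lebesgue measure ½, the centroid x_* = 2 ∫_{{x∈Ω : x·e₁ ≥ 0}} x dx satisfies x_*·e₁ > 0, and for s ∈ (−1,0) the roles are interchanged, so that the centroid of C_1((z_1(s),z_2(s)),w) equals x_* for s ∈ (0,1) and −x_* for s ∈ (−1,0). Consequently, the function s ↦ (centroid of C_1((z_1(s),z_2(s)),w)) on (−1,0) ∪ (0,1) admits no continuous extension to s = 0; hence the optimal centroid map for the mass vector (½,½) does not extend continuously to seed vectors with z_1 = z_2. -/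

import Mathlib

open MeasureTheory Set Filter
open scoped ENNReal Topology RealInnerProductSpace

noncomputable section

/-- Geostrophic space: `ℝ³` with the Euclidean norm. -/
abbrev E3 : Type := EuclideanSpace ℝ (Fin 3)

/-- The matrix `J` encoding planetary rotation: `J₁₂ = -1`, `J₂₁ = 1`, all other entries `0`. -/
def matJ : Matrix (Fin 3) (Fin 3) ℝ := !![0, -1, 0; 1, 0, 0; 0, 0, 0]

/-- `J` as a (continuous) linear map on `ℝ³`. -/
def J : E3 →L[ℝ] E3 := LinearMap.toContinuousLinearMap (Matrix.toEuclideanLin matJ)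

/-- The Laguerre cell `C_i(z, w)` of `Ω` generated by seeds `z` and weights `w`. -/
def lagCell {N : ℕ} (Ω : Set E3) (z : Fin N → E3) (w : Fin N → ℝ) (i : Fin N) : Set E3 :=
  {x | x ∈ Ω ∧ ∀ j, ‖x - z i‖ ^ 2 - w i ≤ ‖x - z j‖ ^ 2 - w j}

/-- The open ball in `ℝ³` of volume 1 centred at the origin. -/
def unitVolBall : Set E3 := Metric.ball 0 ((3 / (4 * Real.pi)) ^ ((1:ℝ) / 3))

/-- The two seeds `z₁(s) = (s,0,0)` and `z₂(s) = (-s,0,0)`. -/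
def seedsPair (s : ℝ) : Fin 2 → E3 :=
  ![EuclideanSpace.single 0 s, EuclideanSpace.single 0 (-s)]

/-- The centroid of the first Laguerre cell generated by `(z₁(s), z₂(s))` with zero weights;
each cell has mass `½`, so the centroid is twice the integral of `x` over the cell. -/
def firstCentroid (s : ℝ) : E3 :=
  (2:ℝ) • ∫ x in lagCell unitVolBall (seedsPair s) ![0, 0] 0, x

/-- The centroid of the right half-ball. -/
def xstar : E3 := (2:ℝ) • ∫ x in {x : E3 | x ∈ unitVolBall ∧ 0 ≤ x 0}, x

/-! ### Auxiliary definitions and lemmas -/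

/-- Reflection negating coordinate `k`. -/
def refl3 (k : Fin 3) : E3 ≃ₗᵢ[ℝ] E3 :=
{ toFun := fun x => WithLp.toLp 2 (fun i => if i = k then -x i else x i)
  invFun := fun x => WithLp.toLp 2 (fun i => if i = k then -x i else x i)
  map_add' := by intro x y; ext i; by_cases h : i = k <;> simp [h, add_comm]
  map_smul' := by intro c x; ext i; by_cases h : i = k <;> simp [h]
  left_inv := by intro x; ext i; by_cases h : i = k <;> simp [h]
  right_inv := by intro x; ext i; by_cases h : i = k <;> simp [h]
  norm_map' := by
    intro x
    rw [EuclideanSpace.norm_eq, EuclideanSpace.norm_eq]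
    congr 1
    apply Finset.sum_congr rfl
    intro i _
    by_cases h : i = k <;> simp [h] }

lemma refl3_apply (k : Fin 3) (x : E3) (i : Fin 3) :
    refl3 k x i = if i = k then -x i else x i := rfl

lemma refl3_symm (k : Fin 3) : (refl3 k).symm = refl3 k := rfl

lemma rad_pos : 0 < (3 / (4 * Real.pi)) ^ ((1:ℝ) / 3) :=
  Real.rpow_pos_of_pos (by positivity) _

lemma rad_cube : ((3 / (4 * Real.pi)) ^ ((1:ℝ) / 3)) ^ (3:ℕ) = 3 / (4 * Real.pi) := by
  rw [← Real.rpow_natCast ((3 / (4 * Real.pi)) ^ ((1:ℝ) / 3)) 3, ← Real.rpow_mul (by positivity)]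
  norm_num

lemma gamma52 : Real.Gamma ((3:ℕ) / 2 + 1) = 3 / 4 * Real.sqrt Real.pi := by
  have h1 : ((3:ℕ) : ℝ) / 2 + 1 = 3 / 2 + 1 := by norm_num
  rw [h1, Real.Gamma_add_one (by norm_num)]
  have h2 : (3:ℝ) / 2 = 1 / 2 + 1 := by norm_num
  rw [h2, Real.Gamma_add_one (by norm_num), Real.Gamma_one_half_eq]
  ring

lemma volume_unitVolBall : volume unitVolBall = 1 := by
  rw [unitVolBall, EuclideanSpace.volume_ball, Fintype.card_fin, gamma52,
    ← ENNReal.ofReal_pow rad_pos.le, rad_cube]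
  rw [← ENNReal.ofReal_mul (by positivity)]
  have hπ : 0 < Real.pi := Real.pi_pos
  have hs : Real.sqrt Real.pi ^ 3 = Real.pi * Real.sqrt Real.pi := by
    rw [pow_succ, Real.sq_sqrt hπ.le]
  have hsp : 0 < Real.sqrt Real.pi := Real.sqrt_pos.mpr hπ
  have : 3 / (4 * Real.pi) * (Real.sqrt Real.pi ^ 3 / (3 / 4 * Real.sqrt Real.pi)) = 1 := by
    rw [hs]; field_simp
  rw [this, ENNReal.ofReal_one]

/-- The right half-ball. -/
def Splus : Set E3 := {x : E3 | x ∈ unitVolBall ∧ 0 ≤ x 0}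

/-- The left half-ball. -/
def Sminus : Set E3 := {x : E3 | x ∈ unitVolBall ∧ x 0 ≤ 0}

lemma mem_unitVolBall_iff (x : E3) :
    x ∈ unitVolBall ↔ ‖x‖ < (3 / (4 * Real.pi)) ^ ((1:ℝ) / 3) := by
  simp [unitVolBall, Metric.mem_ball, dist_zero_right]

lemma refl3_mem_ball (k : Fin 3) (x : E3) : refl3 k x ∈ unitVolBall ↔ x ∈ unitVolBall := by
  rw [mem_unitVolBall_iff, mem_unitVolBall_iff, (refl3 k).norm_map]

lemma refl3_preimage_Splus : refl3 0 ⁻¹' Splus = Sminus := by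
  ext x
  simp only [Set.mem_preimage, Splus, Sminus, Set.mem_setOf_eq, refl3_mem_ball,
    refl3_apply, if_true]
  constructor
  · rintro ⟨h1, h2⟩; exact ⟨h1, by linarith⟩
  · rintro ⟨h1, h2⟩; exact ⟨h1, by linarith⟩

lemma measurableSet_Splus : MeasurableSet Splus := by
  apply MeasurableSet.inter
  · exact Metric.isOpen_ball.measurableSet
  · have hm : Measurable (fun x : E3 => x 0) :=
      ((continuous_apply (0 : Fin 3)).comp (PiLp.continuous_ofLp 2 (fun _ : Fin 3 => ℝ))).measurable
    exact hm measurableSet_Ici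

lemma measurableSet_Sminus : MeasurableSet Sminus := by
  apply MeasurableSet.inter
  · exact Metric.isOpen_ball.measurableSet
  · have hm : Measurable (fun x : E3 => x 0) :=
      ((continuous_apply (0 : Fin 3)).comp (PiLp.continuous_ofLp 2 (fun _ : Fin 3 => ℝ))).measurable
    exact hm measurableSet_Iic

lemma volume_eq_halves : volume Splus = volume Sminus := by
  conv_rhs => rw [← refl3_preimage_Splus]
  exact ((refl3 0).measurePreserving.measure_preimage
    measurableSet_Splus.nullMeasurableSet).symm

lemma volume_hyperplane : volume ({x : E3 | x 0 = 0}) = 0 := by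
  have : {x : E3 | x 0 = 0}
      = (LinearMap.ker ((EuclideanSpace.proj (0 : Fin 3)).toLinearMap) : Submodule ℝ E3) := by
    ext x; simp [LinearMap.mem_ker]
  rw [this]
  apply Measure.addHaar_submodule
  intro h
  have : EuclideanSpace.single (0 : Fin 3) (1:ℝ)
      ∈ LinearMap.ker ((EuclideanSpace.proj (0 : Fin 3)).toLinearMap) := h ▸ Submodule.mem_top
  simp [LinearMap.mem_ker] at this

lemma volume_Splus : volume Splus = ENNReal.ofReal (1/2) := by
  have hunion : Splus ∪ Sminus = unitVolBall := by
    ext x; simp only [Splus, Sminus, Set.mem_union, Set.mem_setOf_eq]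
    constructor
    · rintro (⟨h,_⟩|⟨h,_⟩) <;> exact h
    · intro h; rcases le_total 0 (x 0) with h0 | h0
      · exact Or.inl ⟨h, h0⟩
      · exact Or.inr ⟨h, h0⟩
  have hinter : volume (Splus ∩ Sminus) = 0 := by
    refine measure_mono_null ?_ volume_hyperplane
    rintro x ⟨⟨_, h1⟩, ⟨_, h2⟩⟩
    exact le_antisymm h2 h1
  have key : volume Splus + volume Sminus = 1 := by
    rw [← measure_union_add_inter Splus measurableSet_Sminus] at *
    rw [hinter, add_zero, hunion] at *
    exact volume_unitVolBall
  rw [← volume_eq_halves] at key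
  have hfin : volume Splus ≠ ⊤ := by
    intro h; rw [h] at key; simp at key
  have h2 : 2 * volume Splus = 1 := by rw [two_mul]; exact key
  have : volume Splus = 1 / 2 := by
    rw [ENNReal.eq_div_iff (by norm_num) (by norm_num), mul_comm] at *
    exact h2 ▸ rfl
  rw [this]
  rw [ENNReal.ofReal_div_of_pos (by norm_num)]
  norm_num

lemma volume_Sminus : volume Sminus = ENNReal.ofReal (1/2) := by
  rw [← volume_eq_halves, volume_Splus]

lemma integrableOn_id_Splus : IntegrableOn (fun x : E3 => x) Splus := by
  have hfin : volume Splus ≠ ⊤ := by rw [volume_Splus]; exact ENNReal.ofReal_ne_top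
  exact Measure.integrableOn_of_bounded hfin aestronglyMeasurable_id
    (ae_restrict_of_forall_mem measurableSet_Splus
      (fun x hx => le_of_lt (by simpa [unitVolBall, dist_zero_right] using hx.1)))

/-- Change of variables by reflection. -/
lemma setIntegral_refl (k : Fin 3) (S : Set E3) :
    ∫ x in refl3 k ⁻¹' S, x = refl3 k (∫ x in S, x) := by
  have h1 : ∫ x in refl3 k ⁻¹' S, x = ∫ x in refl3 k ⁻¹' S, (refl3 k).symm (refl3 k x) := by
    simp
  rw [h1, MeasurePreserving.setIntegral_preimage_emb (refl3 k).measurePreserving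
    (refl3 k).toMeasurableEquiv.measurableEmbedding (fun y => (refl3 k).symm y) S]
  calc ∫ y in S, (refl3 k).symm y = (refl3 k).symm (∫ x in S, x) := by
        simpa using LinearIsometry.integral_comp_comm (μ := volume.restrict S)
          (refl3 k).symm.toLinearIsometry (fun y : E3 => y)
    _ = refl3 k (∫ x in S, x) := by rw [refl3_symm]

lemma refl3_fix_Splus (k : Fin 3) (hk : k ≠ 0) : refl3 k ⁻¹' Splus = Splus := by
  ext x
  simp only [Set.mem_preimage, Splus, Set.mem_setOf_eq, refl3_mem_ball, refl3_apply]
  rw [if_neg (Ne.symm hk)]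

lemma integral_Splus_comp (k : Fin 3) (hk : k ≠ 0) : (∫ x in Splus, x) k = 0 := by
  have h := setIntegral_refl k Splus
  rw [refl3_fix_Splus k hk] at h
  have h2 : (∫ x in Splus, x) k = (refl3 k (∫ x in Splus, x)) k := congrArg (fun v : E3 => v k) h
  rw [refl3_apply, if_pos rfl] at h2
  linarith

lemma integral_Sminus : (∫ x in Sminus, x) = -(∫ x in Splus, x) := by
  rw [← refl3_preimage_Splus, setIntegral_refl 0]
  ext i
  rw [refl3_apply]
  by_cases h : i = 0
  · subst h; simp
  · rw [if_neg h]
    have h1 := integral_Splus_comp i h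
    simp only [PiLp.neg_apply, h1, neg_zero]

lemma key_ineq (s : ℝ) (x : E3) :
    ‖x - EuclideanSpace.single 0 s‖ ^ 2 ≤ ‖x - EuclideanSpace.single 0 (-s)‖ ^ 2 ↔
      0 ≤ s * x 0 := by
  rw [norm_sub_sq_real, norm_sub_sq_real, EuclideanSpace.inner_single_right,
    EuclideanSpace.inner_single_right, EuclideanSpace.norm_single, EuclideanSpace.norm_single]
  simp only [RCLike.star_def, starRingEnd_apply, star_trivial, norm_neg]
  constructor <;> intro h <;> nlinarith

lemma lagCell_zero (s : ℝ) (hs : 0 < s) :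
    lagCell unitVolBall (seedsPair s) ![0, 0] 0 = {x : E3 | x ∈ unitVolBall ∧ 0 ≤ x 0} := by
  ext x
  simp only [lagCell, seedsPair, Set.mem_setOf_eq, Fin.forall_fin_two, Matrix.cons_val_zero,
    Matrix.cons_val_one, Matrix.head_cons, sub_zero, le_refl, true_and]
  rw [key_ineq]
  constructor
  · rintro ⟨h1, h2⟩; exact ⟨h1, nonneg_of_mul_nonneg_right h2 hs⟩
  · rintro ⟨h1, h2⟩; exact ⟨h1, mul_nonneg hs.le h2⟩

lemma lagCell_one (s : ℝ) (hs : 0 < s) :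
    lagCell unitVolBall (seedsPair s) ![0, 0] 1 = {x : E3 | x ∈ unitVolBall ∧ x 0 ≤ 0} := by
  ext x
  simp only [lagCell, seedsPair, Set.mem_setOf_eq, Fin.forall_fin_two, Matrix.cons_val_zero,
    Matrix.cons_val_one, Matrix.head_cons, sub_zero, le_refl, and_true]
  constructor
  · rintro ⟨h1, h2⟩
    rw [show ‖x - EuclideanSpace.single 0 (-s)‖ ^ 2 ≤ ‖x - EuclideanSpace.single 0 s‖ ^ 2 ↔
      0 ≤ (-s) * x 0 from by simpa using key_ineq (-s) x] at h2
    refine ⟨h1, ?_⟩; nlinarith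
  · rintro ⟨h1, h2⟩
    refine ⟨h1, ?_⟩
    rw [show ‖x - EuclideanSpace.single 0 (-s)‖ ^ 2 ≤ ‖x - EuclideanSpace.single 0 s‖ ^ 2 ↔
      0 ≤ (-s) * x 0 from by simpa using key_ineq (-s) x]
    nlinarith

lemma lagCell_zero_neg (s : ℝ) (hs : s < 0) :
    lagCell unitVolBall (seedsPair s) ![0, 0] 0 = {x : E3 | x ∈ unitVolBall ∧ x 0 ≤ 0} := by
  ext x
  simp only [lagCell, seedsPair, Set.mem_setOf_eq, Fin.forall_fin_two, Matrix.cons_val_zero,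
    Matrix.cons_val_one, Matrix.head_cons, sub_zero, le_refl, true_and]
  rw [key_ineq]
  constructor
  · rintro ⟨h1, h2⟩; refine ⟨h1, ?_⟩; nlinarith
  · rintro ⟨h1, h2⟩; refine ⟨h1, ?_⟩; nlinarith

lemma integral_comp_proj (k : Fin 3) :
    (∫ x in Splus, x) k = ∫ x in Splus, x k := by
  have := ContinuousLinearMap.integral_comp_comm (EuclideanSpace.proj (𝕜 := ℝ) k)
    integrableOn_id_Splus
  simpa using this.symm

lemma xstar_pos : 0 < xstar 0 := by
  have hx : xstar 0 = 2 * ((∫ x in Splus, x) 0) := by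
    rw [xstar]; rfl
  rw [hx, integral_comp_proj]
  have hpos : 0 < ∫ x in Splus, x 0 := by
    rw [setIntegral_pos_iff_support_of_nonneg_ae]
    · have hsub : Splus \ {x : E3 | x 0 = 0} ⊆ Function.support (fun x : E3 => x 0) ∩ Splus := by
        rintro x ⟨hx1, hx2⟩
        exact ⟨by simpa [Function.mem_support] using hx2, hx1⟩
      have hvol : volume (Splus \ {x : E3 | x 0 = 0}) = ENNReal.ofReal (1/2) := by
        rw [measure_diff_null volume_hyperplane, volume_Splus]
      calc (0:ℝ≥0∞) < ENNReal.ofReal (1/2) := by norm_num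
        _ = volume (Splus \ {x : E3 | x 0 = 0}) := hvol.symm
        _ ≤ _ := measure_mono hsub
    · exact ae_restrict_of_forall_mem measurableSet_Splus (fun x hx => hx.2)
    · exact (EuclideanSpace.proj (𝕜 := ℝ) (0 : Fin 3)).integrable_comp integrableOn_id_Splus
  linarith

lemma fc_pos : ∀ s ∈ Ioo (0:ℝ) 1, firstCentroid s = xstar := by
  intro s hs
  rw [firstCentroid, lagCell_zero s hs.1, xstar]

lemma fc_neg : ∀ s ∈ Ioo (-1:ℝ) 0, firstCentroid s = -xstar := by
  intro s hs
  rw [firstCentroid, lagCell_zero_neg s hs.2, xstar]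
  have : ({x : E3 | x ∈ unitVolBall ∧ x 0 ≤ 0}) = Sminus := rfl
  rw [this, integral_Sminus, smul_neg]
  rfl

/-- **The optimal centroid map admits no continuous extension to coincident seeds**
(Remark 4.13, Counterexample 1, of Bourne, Egan, Pelloni, Wilkinson). -/
theorem optimal_centroid_map_no_continuous_extension :
    -- for `s ∈ (0,1)` the Laguerre cells are the two half-balls
    (∀ s ∈ Ioo (0:ℝ) 1,
      lagCell unitVolBall (seedsPair s) ![0, 0] 0 = {x : E3 | x ∈ unitVolBall ∧ 0 ≤ x 0} ∧
      lagCell unitVolBall (seedsPair s) ![0, 0] 1 = {x : E3 | x ∈ unitVolBall ∧ x 0 ≤ 0}) ∧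
    -- each half-ball has measure ½
    volume {x : E3 | x ∈ unitVolBall ∧ 0 ≤ x 0} = ENNReal.ofReal (1/2) ∧
    volume {x : E3 | x ∈ unitVolBall ∧ x 0 ≤ 0} = ENNReal.ofReal (1/2) ∧
    -- the centroid of the right half-ball has positive first component
    0 < xstar 0 ∧
    -- the centroid of the first cell is `x_*` for `s ∈ (0,1)` and `-x_*` for `s ∈ (-1,0)`
    (∀ s ∈ Ioo (0:ℝ) 1, firstCentroid s = xstar) ∧
    (∀ s ∈ Ioo (-1:ℝ) 0, firstCentroid s = -xstar) ∧
    -- hence the centroid map admits no continuous extension to `s = 0`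
    ¬ ∃ f : ℝ → E3, ContinuousOn f (Ioo (-1:ℝ) 1) ∧
        ∀ s ∈ Ioo (-1:ℝ) 1, s ≠ 0 → f s = firstCentroid s := by
  refine ⟨fun s hs => ⟨lagCell_zero s hs.1, lagCell_one s hs.1⟩,
    volume_Splus, volume_Sminus, xstar_pos, fc_pos, fc_neg, ?_⟩
  rintro ⟨f, hf, hagree⟩
  have h0 : (0:ℝ) ∈ Ioo (-1:ℝ) 1 := by norm_num
  have hc : Tendsto f (𝓝[Ioo (-1:ℝ) 1] 0) (𝓝 (f 0)) := hf 0 h0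
  have hu : Tendsto (fun n : ℕ => (1:ℝ) / (n + 2)) atTop (𝓝 0) := by
    have := (tendsto_one_div_atTop_nhds_zero_nat (𝕜 := ℝ)).comp (tendsto_add_atTop_nat 2)
    refine this.congr (fun n => ?_)
    simp [Function.comp]
  have humem : ∀ n : ℕ, (1:ℝ) / (n + 2) ∈ Ioo (0:ℝ) 1 := by
    intro n
    constructor
    · positivity
    · rw [div_lt_one (by positivity)]
      have : (0:ℝ) ≤ n := Nat.cast_nonneg n
      linarith
  have hmem' : ∀ n : ℕ, (1:ℝ) / (n + 2) ∈ Ioo (-1:ℝ) 1 := by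
    intro n; rcases humem n with ⟨a, b⟩; exact ⟨by linarith, b⟩
  have h1 : Tendsto (fun n : ℕ => f (1 / (n + 2))) atTop (𝓝 (f 0)) :=
    hc.comp (tendsto_nhdsWithin_of_tendsto_nhds_of_eventually_within _ hu
      (Eventually.of_forall hmem'))
  have heq1 : (fun n : ℕ => f (1 / (n + 2))) = fun _ => xstar := by
    funext n
    rw [hagree _ (hmem' n) (ne_of_gt (humem n).1), fc_pos _ (humem n)]
  rw [heq1] at h1
  have hf0 : f 0 = xstar := (tendsto_nhds_unique tendsto_const_nhds h1).symm
  have hv : Tendsto (fun n : ℕ => -((1:ℝ) / (n + 2))) atTop (𝓝 0) := by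
    simpa using hu.neg
  have hvmem : ∀ n : ℕ, -((1:ℝ) / (n + 2)) ∈ Ioo (-1:ℝ) 0 := by
    intro n; rcases humem n with ⟨a, b⟩; exact ⟨by linarith, by linarith⟩
  have hvmem' : ∀ n : ℕ, -((1:ℝ) / (n + 2)) ∈ Ioo (-1:ℝ) 1 := by
    intro n; rcases hvmem n with ⟨a, b⟩; exact ⟨a, by linarith⟩
  have h2 : Tendsto (fun n : ℕ => f (-(1 / (n + 2)))) atTop (𝓝 (f 0)) :=
    hc.comp (tendsto_nhdsWithin_of_tendsto_nhds_of_eventually_within _ hv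
      (Eventually.of_forall hvmem'))
  have heq2 : (fun n : ℕ => f (-(1 / (n + 2)))) = fun _ => -xstar := by
    funext n
    rw [hagree _ (hvmem' n) (ne_of_lt (hvmem n).2), fc_neg _ (hvmem n)]
  rw [heq2] at h2
  have hf0' : f 0 = -xstar := (tendsto_nhds_unique tendsto_const_nhds h2).symm
  have hxx : xstar = -xstar := hf0 ▸ hf0'
  have h3 : xstar 0 = -xstar 0 := by
    conv_lhs => rw [hxx]
    rfl
  have := xstar_pos
  linarith
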